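/- For a matroid M on finite set E, the quotient Q/J_M of the polynomial ring Q = k[X_e : e ∈ E] by the ideal J_M generated by {X_e²}, {X_S : S dependent}, and {X_A − X_{A'} : A, A' independent with equal closure}, has Hilbert series Σ_{i=0}^{r(E)} (number of rank-i flats) · t^i; i.e., dim_k (Q/J_M)_i equals the number of flats of M of rank i. -/

import Mathlib

open MvPolynomial Finset
open scoped Classical

section Expv
variable {E : Type*}

noncomputable def expv (A : Finset E) : E →₀ ℕ := ∑ e ∈ A, Finsupp.single e 1

lemma expv_apply (A : Finset E) (e : E) : expv A e = if e ∈ A then 1 else 0 := by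
  simp [expv, Finsupp.finset_sum_apply, Finsupp.single_apply, Finset.sum_ite_eq']

lemma expv_injective : Function.Injective (expv (E := E)) := by
  intro A B h
  ext e
  have h2 := congrArg (fun f => f e) h
  simp only [expv_apply] at h2
  constructor <;> intro hm <;> by_contra hn <;> simp [hm, hn] at h2

lemma expv_le_iff {A B : Finset E} : expv A ≤ expv B ↔ A ⊆ B := by
  constructor
  · intro h e he
    have h2 := h e
    rw [expv_apply, expv_apply, if_pos he] at h2
    by_contra hB
    rw [if_neg hB] at h2
    omega
  · intro h e
    rw [expv_apply, expv_apply]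
    by_cases he : e ∈ A
    · simp [he, h he]
    · simp [he]

lemma expv_union {A B : Finset E} (h : Disjoint A B) :
    expv (A ∪ B) = expv A + expv B := by
  rw [expv, Finset.sum_union h]; rfl

lemma expv_sdiff {A B : Finset E} (h : A ⊆ B) :
    expv B - expv A = expv (B \ A) := by
  have h2 : B = A ∪ (B \ A) := by rw [Finset.union_sdiff_of_subset h]
  conv_lhs => rw [h2, expv_union (Finset.disjoint_sdiff), add_tsub_cancel_left]

lemma prod_X_eq (k : Type*) [CommSemiring k] (A : Finset E) :
    (∏ e ∈ A, X e : MvPolynomial E k) = monomial (expv A) 1 := by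
  induction A using Finset.induction_on with
  | empty => simp [expv]
  | insert _ _ h ih =>
    rw [Finset.prod_insert h, ih, X, monomial_mul, one_mul, expv, expv,
      Finset.sum_insert h]

lemma expv_support (A : Finset E) : (expv A).support = A := by
  ext e
  rw [Finsupp.mem_support_iff, expv_apply]
  by_cases he : e ∈ A <;> simp [he]

lemma expv_degree (A : Finset E) : (expv A).degree = A.card := by
  show ∑ i ∈ (expv A).support, expv A i = _
  rw [expv_support]
  rw [Finset.card_eq_sum_ones]
  exact Finset.sum_congr rfl fun e he => by rw [expv_apply, if_pos he]

lemma eq_expv_of_squarefree {d : E →₀ ℕ} (h : ∀ e, d e ≤ 1) : d = expv d.support := by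
  ext e
  rw [expv_apply]
  by_cases he : e ∈ d.support
  · rw [if_pos he]
    have h2 := Finsupp.mem_support_iff.mp he
    have := h e
    omega
  · rw [if_neg he]
    simpa using Finsupp.notMem_support_iff.mp he

end Expv

/-- The rank function of a matroid: `r S = max {|F| : F independent, F ⊆ S}`. -/
noncomputable def matroidRank {α : Type*} (M : Matroid α) (S : Set α) : ℕ :=
  sSup {n : ℕ | ∃ I : Set α, I ⊆ S ∧ M.Indep I ∧ I.ncard = n}

section MatroidAux
variable {E : Type*} [Fintype E] {M : Matroid E}

lemma flat_closure (X : Set E) : M.IsFlat (M.closure X) := by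
  refine ⟨fun I X' hI hIX' => ?_, M.closure_subset_ground X⟩
  have h1 : X' ⊆ M.closure X' := M.subset_closure X' hIX'.subset_ground
  rwa [← hIX'.closure_eq_closure, hI.closure_eq_closure, M.closure_closure] at h1

lemma rank_closure_indep (hE : M.E = Set.univ) {I : Set E} (hI : M.Indep I) :
    matroidRank M (M.closure I) = I.ncard := by
  apply IsGreatest.csSup_eq
  constructor
  · exact ⟨I, M.subset_closure I (hE ▸ Set.subset_univ I), hI, rfl⟩
  · rintro n ⟨J, hJsub, hJ, rfl⟩
    obtain ⟨J', hJ', hJJ'⟩ := hJ.subset_isBasis_of_subset hJsub (M.closure_subset_ground I)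
    have h1 : J'.encard = I.encard := hJ'.encard_eq_encard hI.isBasis_closure
    have h2 : J.encard ≤ I.encard := h1 ▸ Set.encard_mono hJJ'
    rw [Set.ncard_def, Set.ncard_def]
    exact ENat.toNat_le_toNat h2 (Set.toFinite I).encard_lt_top.ne

lemma exchange_lemma (hE : M.E = Set.univ) {A A' T : Set E}
    (hA : M.Indep A) (hA' : M.Indep A') (hcl : M.closure A = M.closure A')
    (hd : Disjoint A T) (hAT : M.Indep (A ∪ T)) :
    Disjoint A' T ∧ M.Indep (A' ∪ T) ∧ M.closure (A' ∪ T) = M.closure (A ∪ T) := by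
  have sub : ∀ X : Set E, X ⊆ M.E := fun X => by rw [hE]; exact Set.subset_univ X
  have hclU : M.closure (A' ∪ T) = M.closure (A ∪ T) := by
    rw [← M.closure_union_closure_left_eq A' T, ← hcl, M.closure_union_closure_left_eq]
  have hdisj : Disjoint A' T := by
    rw [Set.disjoint_left]
    intro f hfA' hfT
    have hfA : f ∉ A := Set.disjoint_right.mp hd hfT
    have h1 : f ∈ M.closure A := by
      rw [hcl]; exact M.subset_closure A' (sub A') hfA'
    have h2 : A ⊆ (A ∪ T) \ {f} :=
      Set.subset_diff_singleton Set.subset_union_left hfA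
    exact hAT.notMem_closure_sdiff_of_mem (Set.mem_union_right _ hfT)
      ((M.closure_subset_closure h2) h1)
  refine ⟨hdisj, ?_, hclU⟩
  obtain ⟨I, hI⟩ := M.exists_isBasis (A' ∪ T) (sub _)
  have hIbasis : M.IsBasis I (M.closure (A ∪ T)) := by
    have h3 := hI.isBasis_closure_right
    rwa [hclU] at h3
  have hcard : I.encard = (A ∪ T).encard :=
    hIbasis.encard_eq_encard hAT.isBasis_closure
  have hAA' : A.encard = A'.encard := by
    refine hA.isBasis_closure.encard_eq_encard ?_
    rw [hcl]; exact hA'.isBasis_closure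
  have hcard2 : (A' ∪ T).encard ≤ I.encard := by
    rw [hcard, Set.encard_union_eq hd, Set.encard_union_eq hdisj, hAA']
  have h4 : I = A' ∪ T := (Set.toFinite _).eq_of_subset_of_encard_le hI.subset hcard2
  exact h4 ▸ hI.indep

end MatroidAux

section Lmap
variable {E : Type*} [Fintype E]

/-- independent finsets whose closure is `F` -/
noncomputable def cands (M : Matroid E) (F : Set E) : Finset (Finset E) :=
  Finset.univ.filter fun A => M.Indep (A : Set E) ∧ M.closure (A : Set E) = F

lemma mem_cands {M : Matroid E} {F : Set E} {A : Finset E} :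
    A ∈ cands M F ↔ M.Indep (A : Set E) ∧ M.closure (A : Set E) = F := by
  simp [cands]

noncomputable def tset (M : Matroid E) (F : Set E) (A : Finset E) : Finset (Finset E) :=
  Finset.univ.filter fun T => Disjoint A T ∧ M.Indep ((A ∪ T : Finset E) : Set E) ∧
    M.closure ((A ∪ T : Finset E) : Set E) = F

lemma mem_tset {M : Matroid E} {F : Set E} {A T : Finset E} :
    T ∈ tset M F A ↔ Disjoint A T ∧ M.Indep ((A ∪ T : Finset E) : Set E) ∧
      M.closure ((A ∪ T : Finset E) : Set E) = F := by
  simp [tset]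

variable (k : Type*) [CommRing k]

noncomputable def Lmap (M : Matroid E) (i : ℕ) :
    MvPolynomial E k →ₗ[k] ({τ : Set E // M.IsFlat τ ∧ matroidRank M τ = i} → k) where
  toFun p := fun F => ∑ A ∈ cands M F.1, coeff (expv A) p
  map_add' p q := by funext F; simp [coeff_add, Finset.sum_add_distrib]
  map_smul' c p := by funext F; simp [coeff_smul, smul_eq_mul, Finset.mul_sum]

lemma Lmap_apply (M : Matroid E) (i : ℕ) (p : MvPolynomial E k)
    (F : {τ : Set E // M.IsFlat τ ∧ matroidRank M τ = i}) :
    Lmap k M i p F = ∑ A ∈ cands M F.1, coeff (expv A) p := rfl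

lemma sum_coeff_mul_mon (M : Matroid E) (F : Set E) (A : Finset E)
    (q : MvPolynomial E k) :
    ∑ B ∈ cands M F, coeff (expv B) (q * monomial (expv A) 1) =
      ∑ T ∈ tset M F A, coeff (expv T) q := by
  have h1 : ∀ B ∈ cands M F, coeff (expv B) (q * monomial (expv A) 1) =
      if A ⊆ B then coeff (expv B - expv A) q else 0 := by
    intro B _
    rw [coeff_mul_monomial']
    by_cases h : A ⊆ B
    · rw [if_pos (expv_le_iff.mpr h), if_pos h, mul_one]
    · rw [if_neg (fun hc => h (expv_le_iff.mp hc)), if_neg h]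
  rw [Finset.sum_congr rfl h1, ← Finset.sum_filter]
  refine Finset.sum_bij' (fun B _ => B \ A) (fun T _ => A ∪ T) ?_ ?_ ?_ ?_ ?_
  · intro B hB
    rw [Finset.mem_filter] at hB
    obtain ⟨hB1, hAB⟩ := hB
    rw [mem_cands] at hB1
    rw [mem_tset, Finset.union_sdiff_of_subset hAB]
    exact ⟨Finset.disjoint_sdiff, hB1.1, hB1.2⟩
  · intro T hT
    rw [mem_tset] at hT
    rw [Finset.mem_filter, mem_cands]
    exact ⟨⟨hT.2.1, hT.2.2⟩, Finset.subset_union_left⟩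
  · intro B hB
    rw [Finset.mem_filter] at hB
    exact Finset.union_sdiff_of_subset hB.2
  · intro T hT
    rw [mem_tset] at hT
    exact Finset.union_sdiff_cancel_left hT.1
  · intro B hB
    rw [Finset.mem_filter] at hB
    rw [expv_sdiff hB.2]

lemma tset_congr {M : Matroid E} (hE : M.E = Set.univ) (F : Set E) {A A' : Finset E}
    (hA : M.Indep (A : Set E)) (hA' : M.Indep (A' : Set E))
    (hcl : M.closure (A : Set E) = M.closure (A' : Set E)) :
    tset M F A = tset M F A' := by
  ext T
  rw [mem_tset, mem_tset]
  constructor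
  · rintro ⟨h1, h2, h3⟩
    rw [← Finset.disjoint_coe] at h1
    rw [Finset.coe_union] at h2 h3
    obtain ⟨d1, d2, d3⟩ := exchange_lemma hE hA hA' hcl h1 h2
    exact ⟨Finset.disjoint_coe.mp d1, by rwa [Finset.coe_union],
      by rw [Finset.coe_union, d3, h3]⟩
  · rintro ⟨h1, h2, h3⟩
    rw [← Finset.disjoint_coe] at h1
    rw [Finset.coe_union] at h2 h3
    obtain ⟨d1, d2, d3⟩ := exchange_lemma hE hA' hA hcl.symm h1 h2
    exact ⟨Finset.disjoint_coe.mp d1, by rwa [Finset.coe_union],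
      by rw [Finset.coe_union, d3, h3]⟩

end Lmap

/-- The generating set
`Λ_M = {x_e²} ∪ {x_S : S dependent} ∪ {x_A − x_{A'} : A, A' independent, σA = σA'}`. -/
def matroidLambda (k : Type*) [CommRing k] {E : Type*} [Fintype E] (M : Matroid E) :
    Set (MvPolynomial E k) :=
  {φ | ∃ e : E, φ = X e ^ 2} ∪
    {φ | ∃ S : Finset E, ¬ M.Indep (S : Set E) ∧ φ = ∏ e ∈ S, X e} ∪
    {φ | ∃ A A' : Finset E, M.Indep (A : Set E) ∧ M.Indep (A' : Set E) ∧
      M.closure (A : Set E) = M.closure (A' : Set E) ∧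
      φ = (∏ e ∈ A, X e) - ∏ e ∈ A', X e}

section Vanish
variable {E : Type*} [Fintype E] (k : Type*) [CommRing k] {M : Matroid E}

lemma Lmap_mul_gen (hE : M.E = Set.univ) (i : ℕ) {g : MvPolynomial E k}
    (hg : g ∈ matroidLambda k M) (q : MvPolynomial E k) :
    Lmap k M i (q * g) = 0 := by
  rcases hg with (⟨e, rfl⟩ | ⟨S, hS, rfl⟩) | ⟨A, A', hA, hA', hcl, rfl⟩
  · funext F
    rw [Lmap_apply, Pi.zero_apply]
    refine Finset.sum_eq_zero fun B _ => ?_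
    rw [X_pow_eq_monomial, coeff_mul_monomial', if_neg]
    intro hle
    have h2 := Finsupp.single_le_iff.mp hle
    rw [expv_apply] at h2
    by_cases hmem : e ∈ B <;> simp [hmem] at h2
  · funext F
    rw [Lmap_apply, Pi.zero_apply, prod_X_eq, sum_coeff_mul_mon]
    refine Finset.sum_eq_zero fun T hT => ?_
    rw [mem_tset] at hT
    exact absurd (hT.2.1.subset (by rw [Finset.coe_union]; exact Set.subset_union_left)) hS
  · rw [prod_X_eq, prod_X_eq, mul_sub, map_sub]
    funext F
    rw [Pi.sub_apply, Pi.zero_apply, Lmap_apply, Lmap_apply,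
      sum_coeff_mul_mon, sum_coeff_mul_mon, tset_congr hE F.1 hA hA' hcl, sub_self]

lemma Lmap_vanish (hE : M.E = Set.univ) (i : ℕ) {p : MvPolynomial E k}
    (hp : p ∈ Ideal.span (matroidLambda k M)) :
    Lmap k M i p = 0 := by
  have key : ∀ q, Lmap k M i (q * p) = 0 := by
    refine Submodule.span_induction (fun x hx q => Lmap_mul_gen k hE i hx q)
      (fun q => by rw [mul_zero, map_zero]) (fun x y _ _ h1 h2 q => ?_)
      (fun a x _ h q => ?_) hp
    · rw [mul_add, map_add, h1, h2, add_zero]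
    · rw [smul_eq_mul, ← mul_assoc]
      exact h (q * a)
  simpa using key 1

end Vanish

section Main
variable {E : Type*} [Fintype E] {M : Matroid E}

lemma exists_bas (hE : M.E = Set.univ) {F : Set E} (hF : M.IsFlat F) {i : ℕ}
    (hr : matroidRank M F = i) :
    ∃ A : Finset E, M.Indep (A : Set E) ∧ M.closure (A : Set E) = F ∧ A.card = i := by
  obtain ⟨I, hI⟩ := M.exists_isBasis F (by rw [hE]; exact Set.subset_univ F)
  refine ⟨(Set.toFinite I).toFinset, ?_, ?_, ?_⟩
  · rw [Set.Finite.coe_toFinset]; exact hI.indep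
  · rw [Set.Finite.coe_toFinset, hI.closure_eq_closure, hF.closure]
  · have h1 : matroidRank M (M.closure I) = I.ncard := rank_closure_indep hE hI.indep
    rw [hI.closure_eq_closure, hF.closure] at h1
    rw [← hr, h1, Set.ncard_eq_toFinset_card I (Set.toFinite I)]

variable (k : Type*) [CommRing k]

lemma Lmap_mon (i : ℕ) (B₀ : Finset E)
    (F : {τ : Set E // M.IsFlat τ ∧ matroidRank M τ = i}) :
    Lmap k M i (monomial (expv B₀) (1 : k)) F =
      if B₀ ∈ cands M F.1 then 1 else 0 := by
  rw [Lmap_apply]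
  have h1 : ∀ A ∈ cands M F.1, coeff (expv A) (monomial (expv B₀) (1 : k)) =
      if A = B₀ then (1 : k) else 0 := by
    intro A _
    rw [coeff_monomial]
    by_cases h : A = B₀
    · subst h; rw [if_pos rfl, if_pos rfl]
    · rw [if_neg (fun hc => h (expv_injective hc.symm)), if_neg h]
  rw [Finset.sum_congr rfl h1, Finset.sum_ite_eq' (cands M F.1) B₀ (fun _ => (1 : k))]

end Main

/-- the `i`-th graded piece of `Q/J_M` has dimension equal to the number
of rank-`i` flats of `M`, i.e. the Hilbert series of `Q/J_M` is
`Σ_i (#rank-i flats) tⁱ`. -/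
theorem hilbert_function_of_JM (k : Type*) [Field k] {E : Type*} [Fintype E]
    (M : Matroid E) (hE : M.E = Set.univ) (i : ℕ) :
    Module.finrank k
        ((homogeneousSubmodule E k i).map
          (Ideal.Quotient.mkₐ k (Ideal.span (matroidLambda k M))).toLinearMap) =
      Nat.card {τ : Set E // M.IsFlat τ ∧ matroidRank M τ = i} := by
  classical
  set J : Ideal (MvPolynomial E k) := Ideal.span (matroidLambda k M) with hJ
  set π := Ideal.Quotient.mkₐ k J with hπ
  haveI : Fintype {τ : Set E // M.IsFlat τ ∧ matroidRank M τ = i} := Fintype.ofFinite _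
  choose bas hbas1 hbas2 hbas3 using
    fun F : {τ : Set E // M.IsFlat τ ∧ matroidRank M τ = i} => exists_bas hE F.2.1 F.2.2
  set v : {τ : Set E // M.IsFlat τ ∧ matroidRank M τ = i} → (MvPolynomial E k ⧸ J) :=
    fun F => π (monomial (expv (bas F)) (1 : k)) with hv
  -- evaluation of Lmap on basis monomials
  have hLm : ∀ F F₀ : {τ : Set E // M.IsFlat τ ∧ matroidRank M τ = i},
      Lmap k M i (monomial (expv (bas F)) (1 : k)) F₀ = if F = F₀ then 1 else 0 := by
    intro F F₀
    rw [Lmap_mon]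
    by_cases h : F = F₀
    · subst h
      rw [if_pos (mem_cands.mpr ⟨hbas1 F, hbas2 F⟩), if_pos rfl]
    · rw [if_neg h, if_neg]
      intro hc
      rw [mem_cands] at hc
      exact h (Subtype.ext ((hbas2 F).symm.trans hc.2))
  -- linear independence of v
  have hindep : LinearIndependent k v := by
    rw [Fintype.linearIndependent_iff]
    intro c hc F₀
    set p : MvPolynomial E k := ∑ F, c F • monomial (expv (bas F)) (1 : k) with hp
    have hπp : π p = 0 := by
      rw [hp, map_sum]
      simp_rw [map_smul]
      exact hc
    have hpJ : p ∈ J := by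
      rwa [hπ, Ideal.Quotient.mkₐ_eq_mk, Ideal.Quotient.eq_zero_iff_mem] at hπp
    have h0 : Lmap k M i p F₀ = 0 := by
      rw [Lmap_vanish k hE i hpJ]; rfl
    have h2 : Lmap k M i p F₀ = ∑ F, c F * (if F = F₀ then (1 : k) else 0) := by
      rw [hp, map_sum, Finset.sum_apply]
      refine Finset.sum_congr rfl fun F _ => ?_
      rw [map_smul, Pi.smul_apply, hLm F F₀, smul_eq_mul]
    rw [h2] at h0
    simpa using h0
  -- the image submodule equals the span of v
  have hspan : (homogeneousSubmodule E k i).map π.toLinearMap =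
      Submodule.span k (Set.range v) := by
    apply le_antisymm
    · rintro x ⟨p, hp, rfl⟩
      rw [SetLike.mem_coe, mem_homogeneousSubmodule] at hp
      have hrep : π.toLinearMap p = ∑ d ∈ p.support, coeff d p • π (monomial d (1 : k)) := by
        show π p = _
        conv_lhs => rw [← support_sum_monomial_coeff p]
        rw [map_sum]
        refine Finset.sum_congr rfl fun d _ => ?_
        rw [← map_smul]
        congr 1
        rw [smul_monomial, smul_eq_mul, mul_one]
      rw [hrep]
      refine Submodule.sum_mem _ fun d hd => Submodule.smul_mem _ _ ?_
      have hdeg : d.degree = i := by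
        by_contra hne
        exact (MvPolynomial.mem_support_iff.mp hd) (hp.coeff_eq_zero hne)
      by_cases hsq : ∀ e, d e ≤ 1
      · -- squarefree
        have hdS : d = expv d.support := eq_expv_of_squarefree hsq
        set S : Finset E := d.support with hSdef
        have hcard : S.card = i := by rw [← expv_degree S, ← hdS, hdeg]
        by_cases hind : M.Indep (S : Set E)
        · -- independent: equal to v of its flat
          have hflat : M.IsFlat (M.closure (S : Set E)) := flat_closure _
          have hrank : matroidRank M (M.closure (S : Set E)) = i := by
            rw [rank_closure_indep hE hind, Set.ncard_coe_finset, hcard]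
          set F : {τ : Set E // M.IsFlat τ ∧ matroidRank M τ = i} :=
            ⟨M.closure (S : Set E), hflat, hrank⟩ with hF
          have heq : π (monomial d (1 : k)) = v F := by
            rw [hv, hπ, Ideal.Quotient.mkₐ_eq_mk, Ideal.Quotient.eq]
            apply Ideal.subset_span
            refine Or.inr ⟨S, bas F, hind, hbas1 F, ?_, ?_⟩
            · rw [hbas2 F]
            · rw [prod_X_eq, prod_X_eq, ← hdS]
          rw [heq]
          exact Submodule.subset_span ⟨F, rfl⟩
        · -- dependent: maps to zero
          have hmem : monomial d (1 : k) ∈ J := by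
            apply Ideal.subset_span
            exact Or.inl (Or.inr ⟨S, hind, by rw [prod_X_eq, ← hdS]⟩)
          have hz : π (monomial d (1 : k)) = 0 := by
            rw [hπ, Ideal.Quotient.mkₐ_eq_mk, Ideal.Quotient.eq_zero_iff_mem]
            exact hmem
          rw [hz]
          exact Submodule.zero_mem _
      · -- not squarefree: maps to zero
        push_neg at hsq
        obtain ⟨e, he⟩ := hsq
        have hle : Finsupp.single e 2 ≤ d := Finsupp.single_le_iff.mpr he
        have hmem : monomial d (1 : k) ∈ J := by
          have hfac : monomial d (1 : k) =
              (X e ^ 2) * monomial (d - Finsupp.single e 2) 1 := by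
            rw [X_pow_eq_monomial, monomial_mul, one_mul]
            congr 1
            rw [add_tsub_cancel_of_le hle]
          rw [hfac]
          exact Ideal.mul_mem_right _ _ (Ideal.subset_span (Or.inl (Or.inl ⟨e, rfl⟩)))
        have hz : π (monomial d (1 : k)) = 0 := by
          rw [hπ, Ideal.Quotient.mkₐ_eq_mk, Ideal.Quotient.eq_zero_iff_mem]
          exact hmem
        rw [hz]
        exact Submodule.zero_mem _
    · rw [Submodule.span_le]
      rintro x ⟨F, rfl⟩
      refine ⟨monomial (expv (bas F)) (1 : k), ?_, rfl⟩
      rw [SetLike.mem_coe, mem_homogeneousSubmodule]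
      exact isHomogeneous_monomial _ (by rw [expv_degree, hbas3 F])
  rw [hspan, finrank_span_eq_card hindep, Nat.card_eq_fintype_card]
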